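/- For m in M_{(b_i);(c_j)} and i, j, if a is the k-th largest element of B_i ∩ w_m^{-1}(C_j) (for 1 ≤ k ≤ m_{i,j}), then inv_a(w_m) = m_{≤i,≥j} − k. -/

import Mathlib

open Equiv Finset

/-- `s` is one of the standard Coxeter generators (adjacent transpositions) of `S_d`. -/
def IsAdjTrans {d : ℕ} (s : Perm (Fin d)) : Prop :=
  ∃ (i : ℕ) (h : i + 1 < d), s = Equiv.swap ⟨i, Nat.lt_of_succ_lt h⟩ ⟨i + 1, h⟩

/-- Coxeter length: minimal length of an expression of `w` as a product of
adjacent transpositions. -/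
noncomputable def len {d : ℕ} (w : Perm (Fin d)) : ℕ :=
  sInf {n | ∃ l : List (Perm (Fin d)),
    l.length = n ∧ (∀ s ∈ l, IsAdjTrans s) ∧ l.prod = w}

/-- Bruhat order: `y ≤ w` iff some reduced word for `w` has a subword with product `y`. -/
def BruhatLE {d : ℕ} (y w : Perm (Fin d)) : Prop :=
  ∃ l : List (Perm (Fin d)), (∀ s ∈ l, IsAdjTrans s) ∧ l.length = len w ∧ l.prod = w ∧
    ∃ l' : List (Perm (Fin d)), List.Sublist l' l ∧ l'.prod = y

/-- `inv_a(w) = |{a' < a : w(a') > w(a)}|`. -/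
def invi {d : ℕ} (w : Perm (Fin d)) (a : Fin d) : ℕ :=
  (Finset.univ.filter (fun a' => a' < a ∧ w a < w a')).card

/-- `m` lies in `M_{(b_i);(c_j)}`: an `n × n'` matrix of nonnegative integers
with row sums `b i` and column sums `c j`. -/
def MemM {n n' : ℕ} (b : Fin n → ℕ) (c : Fin n' → ℕ) (m : Fin n → Fin n' → ℕ) : Prop :=
  (∀ i, ∑ j, m i j = b i) ∧ (∀ j, ∑ i, m i j = c j)

/-- The block `B_i ⊆ [1,d]`: the `i`-th consecutive interval, of size `b i`. -/
def block (d : ℕ) {n : ℕ} (b : Fin n → ℕ) (i : Fin n) : Finset (Fin d) :=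
  Finset.univ.filter (fun x : Fin d =>
    ∑ i' ∈ Finset.univ.filter (fun i' => i' < i), b i' ≤ (x : ℕ) ∧
    (x : ℕ) < ∑ i' ∈ Finset.univ.filter (fun i' => i' ≤ i), b i')

/-- `ψ(w)_{i,j} = |w(B_i) ∩ C_j|`. -/
def psi (d : ℕ) {n n' : ℕ} (b : Fin n → ℕ) (c : Fin n' → ℕ) (w : Perm (Fin d)) :
    Fin n → Fin n' → ℕ :=
  fun i j => ((block d b i).filter (fun x => w x ∈ block d c j)).card

/-- `w` lies in the parabolic subgroup preserving each block `B_i` separately. -/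
def PreservesBlocks (d : ℕ) {n : ℕ} (b : Fin n → ℕ) (w : Perm (Fin d)) : Prop :=
  ∀ i : Fin n, ∀ x ∈ block d b i, w x ∈ block d b i

/-- `m_{≤i,≥j} = Σ_{i'≤i, j'≥j} m_{i',j'}`. -/
def sUR {n n' : ℕ} (m : Fin n → Fin n' → ℕ) (i : Fin n) (j : Fin n') : ℕ :=
  ∑ i' ∈ Finset.univ.filter (fun i' => i' ≤ i),
    ∑ j' ∈ Finset.univ.filter (fun j' => j ≤ j'), m i' j'

/-- `m_{≥i,≤j} = Σ_{i'≥i, j'≤j} m_{i',j'}`. -/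
def sLL {n n' : ℕ} (m : Fin n → Fin n' → ℕ) (i : Fin n) (j : Fin n') : ℕ :=
  ∑ i' ∈ Finset.univ.filter (fun i' => i ≤ i'),
    ∑ j' ∈ Finset.univ.filter (fun j' => j' ≤ j), m i' j'

section Ntheory
variable {d : ℕ}


/-- inversion pairs -/
def myNp (w : Perm (Fin d)) : Finset (Fin d × Fin d) :=
  univ.filter (fun p => p.1 < p.2 ∧ w p.2 < w p.1)

/-- inversion number -/
def myN (w : Perm (Fin d)) : ℕ := (myNp w).card

lemma mem_myNp {w : Perm (Fin d)} {p : Fin d × Fin d} :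
    p ∈ myNp w ↔ p.1 < p.2 ∧ w p.2 < w p.1 := by
  simp [myNp]

lemma myN_inv (w : Perm (Fin d)) : myN w⁻¹ = myN w := by
  unfold myN
  refine Finset.card_nbij' (fun p => (w⁻¹ p.2, w⁻¹ p.1)) (fun p => (w p.2, w p.1)) ?_ ?_ ?_ ?_
  · intro p hp
    simp only [Finset.mem_coe] at hp ⊢
    rw [mem_myNp] at hp ⊢
    exact ⟨hp.2, by simpa using hp.1⟩
  · intro p hp
    simp only [Finset.mem_coe] at hp ⊢
    rw [mem_myNp] at hp ⊢
    exact ⟨hp.2, by simpa using hp.1⟩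
  · intro p _; simp
  · intro p _; simp

lemma swap_adj_lt {p q u v : Fin d} (hpq : (p:ℕ)+1 = q) (huv : u < v)
    (hne : ¬(u = p ∧ v = q)) : Equiv.swap p q u < Equiv.swap p q v := by
  rw [Equiv.swap_apply_def, Equiv.swap_apply_def]
  split_ifs <;> fin_omega

lemma myN_mul_swap_le {p q : Fin d} (hpq : (p:ℕ)+1 = q) (w : Perm (Fin d)) :
    myN (w * Equiv.swap p q) ≤ myN w + 1 := by
  have h1 : ((myNp (w * Equiv.swap p q)).erase (p, q)).card ≤ myN w := by
    apply Finset.card_le_card_of_injOn (fun x => (Equiv.swap p q x.1, Equiv.swap p q x.2))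
    · intro x hx
      simp only [Finset.mem_coe] at hx ⊢
      rw [Finset.mem_erase] at hx
      obtain ⟨hne, hx⟩ := hx
      rw [mem_myNp] at hx ⊢
      refine ⟨swap_adj_lt hpq hx.1 ?_, by simpa using hx.2⟩
      intro ⟨h1, h2⟩
      exact hne (Prod.ext h1 h2)
    · intro x _ y _ h
      simp only [Prod.mk.injEq] at h
      exact Prod.ext (Equiv.injective _ h.1) (Equiv.injective _ h.2)
  have h2 : myN (w * Equiv.swap p q) ≤ ((myNp (w * Equiv.swap p q)).erase (p, q)).card + 1 := by
    by_cases hm : (p, q) ∈ myNp (w * Equiv.swap p q)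
    · exact le_of_eq (Finset.card_erase_add_one hm).symm
    · rw [Finset.erase_eq_of_notMem hm]
      exact Nat.le_succ _
  omega

lemma myN_mul_swap_lt {p q : Fin d} (hpq : (p:ℕ)+1 = q) (w : Perm (Fin d))
    (h : w q < w p) : myN (w * Equiv.swap p q) < myN w := by
  have hpq' : p < q := by rw [Fin.lt_def]; omega
  have hmem : (p, q) ∈ myNp w := mem_myNp.2 ⟨hpq', h⟩
  have h1 : myN (w * Equiv.swap p q) ≤ ((myNp w).erase (p, q)).card := by
    apply Finset.card_le_card_of_injOn (fun x => (Equiv.swap p q x.1, Equiv.swap p q x.2))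
    · intro x hx
      simp only [Finset.mem_coe] at hx ⊢
      rw [mem_myNp] at hx
      have hxne : ¬(x.1 = p ∧ x.2 = q) := by
        rintro ⟨e1, e2⟩
        have hc := hx.2
        rw [e1, e2] at hc
        simp only [Perm.mul_apply, Equiv.swap_apply_left, Equiv.swap_apply_right] at hc
        exact absurd hc (not_lt.2 h.le)
      rw [Finset.mem_erase, mem_myNp]
      constructor
      · intro hcon
        rw [Prod.ext_iff] at hcon
        have e1 : x.1 = q := by
          apply Equiv.injective (Equiv.swap p q)
          rw [Equiv.swap_apply_right]
          exact hcon.1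
        have e2 : x.2 = p := by
          apply Equiv.injective (Equiv.swap p q)
          rw [Equiv.swap_apply_left]
          exact hcon.2
        rw [e1, e2] at hx
        exact absurd hx.1 (not_lt.2 hpq'.le)
      · exact ⟨swap_adj_lt hpq hx.1 hxne, by simpa using hx.2⟩
    · intro x _ y _ hxy
      simp only [Prod.mk.injEq] at hxy
      exact Prod.ext (Equiv.injective _ hxy.1) (Equiv.injective _ hxy.2)
  have h2 : ((myNp w).erase (p, q)).card < myN w :=
    Finset.card_erase_lt_of_mem hmem
  omega

lemma myN_mul_swap_gt {p q : Fin d} (hpq : (p:ℕ)+1 = q) (w : Perm (Fin d))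
    (h : w p < w q) : myN w < myN (w * Equiv.swap p q) := by
  have key := myN_mul_swap_lt hpq (w * Equiv.swap p q) (by
    simp [Perm.mul_apply, Equiv.swap_apply_left, Equiv.swap_apply_right, h])
  rwa [mul_assoc, Equiv.swap_mul_self, mul_one] at key

lemma myN_prod_le (l : List (Perm (Fin d))) (h : ∀ s ∈ l, IsAdjTrans s) :
    myN l.prod ≤ l.length := by
  induction l with
  | nil =>
    simp only [List.prod_nil, List.length_nil, Nat.le_zero, myN, myNp]
    refine Finset.card_eq_zero.2 (Finset.filter_eq_empty_iff.2 ?_)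
    intro p _
    simp only [Perm.one_apply]
    rintro ⟨h1, h2⟩
    exact absurd h2 (not_lt.2 h1.le)
  | cons s t ih =>
    obtain ⟨i, hi, rfl⟩ := h s (by simp)
    have ht := ih (fun x hx => h x (by simp [hx]))
    have key : myN (Equiv.swap ⟨i, Nat.lt_of_succ_lt hi⟩ ⟨i+1, hi⟩ * t.prod) ≤ myN t.prod + 1 := by
      have e : myN (Equiv.swap ⟨i, Nat.lt_of_succ_lt hi⟩ ⟨i+1, hi⟩ * t.prod)
          = myN (t.prod⁻¹ * Equiv.swap ⟨i, Nat.lt_of_succ_lt hi⟩ ⟨i+1, hi⟩) := by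
        rw [← myN_inv (t.prod⁻¹ * _)]
        simp [mul_inv_rev]
      rw [e, ← myN_inv t.prod]
      exact myN_mul_swap_le rfl _
    simp only [List.prod_cons, List.length_cons]
    omega

lemma strictMono_val_le {w : Perm (Fin d)} (hmono : StrictMono ⇑w) (x : Fin d) :
    (x : ℕ) ≤ (w x : ℕ) := by
  suffices h : ∀ t, ∀ x : Fin d, (x:ℕ) = t → t ≤ (w x : ℕ) from h _ x rfl
  intro t
  induction t with
  | zero => intro x _; exact Nat.zero_le _
  | succ t ih =>
    intro x hx
    have hx' : t < d := by omega
    have hlt : (⟨t, hx'⟩ : Fin d) < x := by rw [Fin.lt_def]; show t < (x:ℕ); omega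
    have h1 := hmono hlt
    have h2 := ih ⟨t, hx'⟩ rfl
    rw [Fin.lt_def] at h1
    omega

lemma eq_one_of_strictMono {w : Perm (Fin d)} (hmono : StrictMono ⇑w) : w = 1 := by
  have hmono' : StrictMono ⇑w⁻¹ := by
    intro x y hxy
    rcases lt_trichotomy (w⁻¹ x) (w⁻¹ y) with h' | h' | h'
    · exact h'
    · exact absurd (Equiv.injective w⁻¹ h') (fun hc => by subst hc; exact lt_irrefl _ hxy)
    · exact absurd hxy (not_lt.2 (by simpa using (hmono h').le))
  ext x
  have h1 := strictMono_val_le hmono x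
  have h2 := strictMono_val_le hmono' (w x)
  simp only [Perm.inv_def, Equiv.symm_apply_apply] at h2
  simp only [Perm.one_apply]
  omega

lemma eq_one_of_myN_zero {w : Perm (Fin d)} (h : myN w = 0) : w = 1 := by
  apply eq_one_of_strictMono
  intro x y hxy
  rcases lt_trichotomy (w x) (w y) with h' | h' | h'
  · exact h'
  · exact absurd (Equiv.injective w h') (fun hc => by subst hc; exact lt_irrefl _ hxy)
  · exact absurd h (Finset.card_ne_zero_of_mem ((mem_myNp (p := (x, y))).2 ⟨hxy, h'⟩))

lemma exists_descent {w : Perm (Fin d)} (hw : w ≠ 1) :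
    ∃ (i : ℕ) (h : i + 1 < d), w ⟨i+1, h⟩ < w ⟨i, Nat.lt_of_succ_lt h⟩ := by
  by_contra hcon
  push_neg at hcon
  apply hw
  apply eq_one_of_strictMono
  cases d with
  | zero => intro x; exact absurd x.2 (by omega)
  | succ d' =>
    rw [Fin.strictMono_iff_lt_succ]
    intro i
    have hi : (i:ℕ)+1 < d'+1 := by omega
    have e1 : Fin.castSucc i = (⟨(i:ℕ), by omega⟩ : Fin (d'+1)) := rfl
    have e2 : i.succ = (⟨(i:ℕ)+1, hi⟩ : Fin (d'+1)) := rfl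
    rw [e1, e2]
    have hle := hcon (i:ℕ) hi
    have hne : w (⟨(i:ℕ), by omega⟩ : Fin (d'+1)) ≠ w ⟨(i:ℕ)+1, hi⟩ := by
      intro hc
      have := Equiv.injective w hc
      rw [Fin.ext_iff] at this
      simp at this
    exact lt_of_le_of_ne hle hne

lemma exists_word (w : Perm (Fin d)) :
    ∃ l : List (Perm (Fin d)), (∀ s ∈ l, IsAdjTrans s) ∧ l.prod = w ∧ l.length ≤ myN w := by
  suffices h : ∀ k, ∀ w : Perm (Fin d), myN w ≤ k →
      ∃ l : List (Perm (Fin d)), (∀ s ∈ l, IsAdjTrans s) ∧ l.prod = w ∧ l.length ≤ myN w from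
    h (myN w) w le_rfl
  intro k
  induction k with
  | zero =>
    intro w hw
    have := eq_one_of_myN_zero (Nat.le_zero.1 hw)
    exact ⟨[], by simp, by simp [this], by simp⟩
  | succ k ih =>
    intro w hw
    by_cases h1 : w = 1
    · exact ⟨[], by simp, by simp [h1], by simp⟩
    · obtain ⟨i, hi, hdesc⟩ := exists_descent h1
      set s := Equiv.swap (⟨i, Nat.lt_of_succ_lt hi⟩ : Fin d) ⟨i+1, hi⟩ with hs
      have hlt : myN (w * s) < myN w := myN_mul_swap_lt rfl w hdesc
      obtain ⟨l, hl1, hl2, hl3⟩ := ih (w * s) (by omega)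
      refine ⟨l ++ [s], ?_, ?_, ?_⟩
      · intro x hx
        rcases List.mem_append.1 hx with h | h
        · exact hl1 x h
        · simp only [List.mem_singleton] at h; subst h; exact ⟨i, hi, rfl⟩
      · rw [List.prod_append, hl2]
        simp [hs, mul_assoc]
      · simp only [List.length_append, List.length_singleton]
        omega

lemma len_eq_myN (w : Perm (Fin d)) : len w = myN w := by
  obtain ⟨l, hl1, hl2, hl3⟩ := exists_word w
  apply le_antisymm
  · exact le_trans (Nat.sInf_le ⟨l, rfl, hl1, hl2⟩) hl3
  · have hne : {n | ∃ l : List (Perm (Fin d)),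
        l.length = n ∧ (∀ s ∈ l, IsAdjTrans s) ∧ l.prod = w}.Nonempty :=
      ⟨l.length, l, rfl, hl1, hl2⟩
    obtain ⟨l', hl'0, hl'1, hl'2⟩ := Nat.sInf_mem hne
    calc myN w = myN l'.prod := by rw [hl'2]
      _ ≤ l'.length := myN_prod_le l' hl'1
      _ = len w := hl'0

end Ntheory

section Blocks

variable {d n : ℕ} {b : Fin n → ℕ}

/-- partial sum function -/
def flo (b : Fin n → ℕ) (t : ℕ) : ℕ := ∑ i ∈ univ.filter (fun i : Fin n => (i:ℕ) < t), b i

lemma mem_block_iff {i : Fin n} {x : Fin d} :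
    x ∈ block d b i ↔ flo b (i:ℕ) ≤ (x:ℕ) ∧ (x:ℕ) < flo b ((i:ℕ)+1) := by
  unfold block flo
  rw [Finset.mem_filter]
  have e1 : univ.filter (fun i' => i' < i) = univ.filter (fun i' : Fin n => (i':ℕ) < (i:ℕ)) := by
    apply Finset.filter_congr; intro x _; exact Fin.lt_def
  have e2 : univ.filter (fun i' => i' ≤ i) = univ.filter (fun i' : Fin n => (i':ℕ) < (i:ℕ)+1) := by
    apply Finset.filter_congr; intro x _
    rw [Fin.le_def, Nat.lt_succ_iff]
  rw [e1, e2]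
  simp

lemma flo_mono (b : Fin n → ℕ) {s t : ℕ} (h : s ≤ t) : flo b s ≤ flo b t := by
  apply Finset.sum_le_sum_of_subset
  intro x
  simp only [Finset.mem_filter, Finset.mem_univ, true_and]
  omega

lemma flo_top (b : Fin n → ℕ) : flo b n = ∑ i, b i := by
  unfold flo
  congr 1
  rw [Finset.filter_true_of_mem]
  intro x _
  exact x.2

lemma exists_block (hb : ∑ i, b i = d) (x : Fin d) : ∃ i : Fin n, x ∈ block d b i := by
  have hx : (x:ℕ) < d := x.2
  set P : ℕ → Prop := fun t => flo b t ≤ (x:ℕ) with hP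
  have hP0 : P 0 := by simp [hP, flo]
  have hPn : ¬ P n := by
    simp only [hP, flo_top, hb, not_le]
    exact hx
  have hn0 : 0 < n := by
    rcases Nat.eq_zero_or_pos n with h | h
    · exfalso; apply hPn; subst h; exact hP0
    · exact h
  set t := Nat.findGreatest P n with ht
  have htP : P t := Nat.findGreatest_spec (Nat.zero_le n) hP0
  have htle : t ≤ n := Nat.findGreatest_le n
  have htn : t ≠ n := fun hc => hPn (hc ▸ htP)
  have htlt : t < n := lt_of_le_of_ne htle htn
  have hsucc : ¬ P (t+1) :=
    Nat.findGreatest_is_greatest (show Nat.findGreatest P n < t+1 by omega) (by omega)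
  refine ⟨⟨t, htlt⟩, ?_⟩
  rw [mem_block_iff]
  exact ⟨htP, by simpa [hP] using hsucc⟩

lemma block_unique {i i' : Fin n} {x : Fin d} (h : x ∈ block d b i) (h' : x ∈ block d b i') :
    i = i' := by
  rw [mem_block_iff] at h h'
  by_contra hne
  rcases lt_or_gt_of_ne hne with hlt | hlt
  · have := flo_mono b (show (i:ℕ)+1 ≤ (i':ℕ) from hlt)
    omega
  · have := flo_mono b (show (i':ℕ)+1 ≤ (i:ℕ) from hlt)
    omega

lemma block_lt_block {i i' : Fin n} {x y : Fin d} (hii : i < i')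
    (hx : x ∈ block d b i) (hy : y ∈ block d b i') : x < y := by
  rw [mem_block_iff] at hx hy
  have := flo_mono b (show (i:ℕ)+1 ≤ (i':ℕ) from hii)
  rw [Fin.lt_def]
  omega

/-- membership transfer: two elements of the same block are in the same blocks -/
lemma block_mem_congr {i0 i' : Fin n} {u v : Fin d} (hu : u ∈ block d b i0)
    (hv : v ∈ block d b i0) (h : u ∈ block d b i') : v ∈ block d b i' := by
  have := block_unique h hu
  subst this
  exact hv

/-- chain: a map decreasing on adjacent pairs within a block is decreasing on the block -/
lemma block_chain {i0 : Fin n} (g : Fin d → Fin d)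
    (hadj : ∀ (x : Fin d) (h1 : (x:ℕ)+1 < d), x ∈ block d b i0 →
      (⟨(x:ℕ)+1, h1⟩ : Fin d) ∈ block d b i0 → g ⟨(x:ℕ)+1, h1⟩ < g x) :
    ∀ x y : Fin d, x ∈ block d b i0 → y ∈ block d b i0 → x < y → g y < g x := by
  suffices h : ∀ t, ∀ x y : Fin d, x ∈ block d b i0 → y ∈ block d b i0 →
      (y:ℕ) = (x:ℕ) + 1 + t → g y < g x by
    intro x y hx hy hxy
    rw [Fin.lt_def] at hxy
    exact h ((y:ℕ) - (x:ℕ) - 1) x y hx hy (by omega)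
  intro t
  induction t with
  | zero =>
    intro x y hx hy hxy
    have h1 : (x:ℕ)+1 < d := by have := y.2; omega
    have : y = ⟨(x:ℕ)+1, h1⟩ := by rw [Fin.ext_iff]; simpa using hxy
    subst this
    exact hadj x h1 hx hy
  | succ t ih =>
    intro x y hx hy hxy
    have hz : (x:ℕ)+1 < d := by have := y.2; omega
    set z : Fin d := ⟨(x:ℕ)+1, hz⟩ with hzdef
    have hzval : (z:ℕ) = (x:ℕ)+1 := rfl
    have hzmem : z ∈ block d b i0 := by
      rw [mem_block_iff] at hx hy ⊢
      rw [hzval]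
      omega
    have h1 : g z < g x := hadj x hz hx hzmem
    have h2 : g y < g z := ih z y hzmem hy (by rw [hzval]; omega)
    exact h2.trans h1

end Blocks

section Facts
variable {d n n' : ℕ} {b : Fin n → ℕ} {c : Fin n' → ℕ}

lemma swap_mem_block {x y z : Fin d} {i0 i' : Fin n} (hx : x ∈ block d b i0)
    (hy : y ∈ block d b i0) (hz : z ∈ block d b i') : Equiv.swap x y z ∈ block d b i' := by
  rcases eq_or_ne z x with rfl | hzx
  · rw [Equiv.swap_apply_left]; exact block_mem_congr hx hy hz
  rcases eq_or_ne z y with rfl | hzy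
  · rw [Equiv.swap_apply_right]; exact block_mem_congr hy hx hz
  · rw [Equiv.swap_apply_of_ne_of_ne hzx hzy]; exact hz

lemma swap_mem_block_iff {x y z : Fin d} {i0 i' : Fin n} (hx : x ∈ block d b i0)
    (hy : y ∈ block d b i0) : Equiv.swap x y z ∈ block d b i' ↔ z ∈ block d b i' := by
  constructor
  · intro h
    have := swap_mem_block hx hy h
    rwa [Equiv.swap_apply_self] at this
  · exact swap_mem_block hx hy

lemma psi_mul_swap (w : Perm (Fin d)) {x y : Fin d} {i0 : Fin n}
    (hx : x ∈ block d b i0) (hy : y ∈ block d b i0) :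
    psi d b c (w * Equiv.swap x y) = psi d b c w := by
  funext i' j'
  unfold psi
  apply Finset.card_nbij' (fun z => Equiv.swap x y z) (fun z => Equiv.swap x y z)
  · intro z hz
    simp only [Finset.mem_coe] at hz ⊢
    rw [Finset.mem_filter] at hz ⊢
    refine ⟨swap_mem_block hx hy hz.1, ?_⟩
    have := hz.2
    rwa [Perm.mul_apply] at this
  · intro z hz
    simp only [Finset.mem_coe] at hz ⊢
    rw [Finset.mem_filter] at hz ⊢
    refine ⟨swap_mem_block hx hy hz.1, ?_⟩
    rw [Perm.mul_apply, Equiv.swap_apply_self]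
    exact hz.2
  · intro z _; exact Equiv.swap_apply_self _ _ _
  · intro z _; exact Equiv.swap_apply_self _ _ _

lemma psi_swap_mul (w : Perm (Fin d)) {u v : Fin d} {j0 : Fin n'}
    (hu : u ∈ block d c j0) (hv : v ∈ block d c j0) :
    psi d b c (Equiv.swap u v * w) = psi d b c w := by
  funext i' j'
  unfold psi
  congr 1
  apply Finset.filter_congr
  intro z _
  rw [Perm.mul_apply]
  exact swap_mem_block_iff hu hv

lemma factA {w : Perm (Fin d)}
    (hmax : ∀ y : Perm (Fin d), psi d b c y = psi d b c w → len y ≤ len w)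
    (i0 : Fin n) : ∀ x y : Fin d, x ∈ block d b i0 → y ∈ block d b i0 → x < y →
      w y < w x := by
  apply block_chain
  intro x h1 hx hx'
  by_contra hcon
  push_neg at hcon
  have hne : w x ≠ w ⟨(x:ℕ)+1, h1⟩ := by
    intro hc
    have h2 := Equiv.injective w hc
    rw [Fin.ext_iff] at h2
    simp at h2
  have hlt : w x < w ⟨(x:ℕ)+1, h1⟩ := lt_of_le_of_ne hcon hne
  have hpsi : psi d b c (w * Equiv.swap x ⟨(x:ℕ)+1, h1⟩) = psi d b c w :=
    psi_mul_swap w hx hx'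
  have h2 : myN w < myN (w * Equiv.swap x ⟨(x:ℕ)+1, h1⟩) := myN_mul_swap_gt rfl w hlt
  have h3 := hmax _ hpsi
  rw [len_eq_myN, len_eq_myN] at h3
  omega

lemma factB {w : Perm (Fin d)}
    (hmax : ∀ y : Perm (Fin d), psi d b c y = psi d b c w → len y ≤ len w)
    (j0 : Fin n') : ∀ x y : Fin d, w x ∈ block d c j0 → w y ∈ block d c j0 → x < y →
      w y < w x := by
  have key : ∀ u v : Fin d, u ∈ block d c j0 → v ∈ block d c j0 → u < v → w⁻¹ v < w⁻¹ u := by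
    apply block_chain (b := c) (g := ⇑w⁻¹)
    intro u h1 hu hu'
    by_contra hcon
    push_neg at hcon
    have hne : w⁻¹ u ≠ w⁻¹ ⟨(u:ℕ)+1, h1⟩ := by
      intro hc
      have h2 := Equiv.injective w⁻¹ hc
      rw [Fin.ext_iff] at h2
      simp at h2
    have hlt : w⁻¹ u < w⁻¹ ⟨(u:ℕ)+1, h1⟩ := lt_of_le_of_ne hcon hne
    have hpsi : psi d b c (Equiv.swap u ⟨(u:ℕ)+1, h1⟩ * w) = psi d b c w :=
      psi_swap_mul w hu hu'
    have h2 : myN w < myN (Equiv.swap u ⟨(u:ℕ)+1, h1⟩ * w) := by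
      have e : myN (Equiv.swap u ⟨(u:ℕ)+1, h1⟩ * w)
          = myN (w⁻¹ * Equiv.swap u ⟨(u:ℕ)+1, h1⟩) := by
        rw [← myN_inv (w⁻¹ * Equiv.swap u ⟨(u:ℕ)+1, h1⟩), mul_inv_rev, inv_inv,
          Equiv.swap_inv]
      rw [e, ← myN_inv w]
      exact myN_mul_swap_gt rfl w⁻¹ hlt
    have h3 := hmax _ hpsi
    rw [len_eq_myN, len_eq_myN] at h3
    omega
  intro x y hx hy hxy
  rcases lt_trichotomy (w x) (w y) with h | h | h
  · have h2 := key (w x) (w y) hx hy h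
    simp only [Perm.inv_def, Equiv.symm_apply_apply] at h2
    exact absurd h2 (not_lt.2 hxy.le)
  · exact absurd (Equiv.injective w h) (ne_of_lt hxy)
  · exact h

end Facts


/-- if `a` is the `k`-th largest element of `B_i ∩ w_m⁻¹(C_j)`
(for `1 ≤ k ≤ m_{i,j}`), then `inv_a(w_m) = m_{≤i,≥j} − k` (stated additively). -/
theorem stmt11 (d n n' : ℕ) (b : Fin n → ℕ) (c : Fin n' → ℕ)
    (hb : ∑ i, b i = d) (hc : ∑ j, c j = d)
    (m : Fin n → Fin n' → ℕ) (hm : MemM b c m)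
    (w : Perm (Fin d)) (hw : psi d b c w = m)
    (hmax : ∀ y : Perm (Fin d), psi d b c y = m → len y ≤ len w)
    (i : Fin n) (j : Fin n') (k : ℕ) (hk1 : 1 ≤ k) (hk2 : k ≤ m i j)
    (a : Fin d) (ha : a ∈ (block d b i).filter (fun x => w x ∈ block d c j))
    (hkth : (((block d b i).filter (fun x => w x ∈ block d c j)).filter
        (fun x => a ≤ x)).card = k) :
    invi w a + k = sUR m i j := by
  classical
  rw [Finset.mem_filter] at ha
  obtain ⟨haB, haC⟩ := ha
  choose bOf hbOf using exists_block hb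
  choose cOf hcOf using exists_block hc
  have hmax' : ∀ y : Perm (Fin d), psi d b c y = psi d b c w → len y ≤ len w := by
    intro y hy; exact hmax y (by rw [hy, hw])
  have fA := factA hmax'
  have fB := factB hmax'
  have hmcard : ∀ i' j', m i' j'
      = ((block d b i').filter (fun x => w x ∈ block d c j')).card := by
    intro i' j'; rw [← hw]; rfl
  set S := univ.filter (fun a' : Fin d => a' < a ∧ w a < w a') with hS
  have hinvi : invi w a = S.card := rfl
  have hfib : S.card = ∑ p ∈ (univ : Finset (Fin n × Fin n')),
      (S.filter (fun x => (bOf x, cOf (w x)) = p)).card :=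
    Finset.card_eq_sum_card_fiberwise (fun x _ => Finset.mem_univ _)
  have hbiff : ∀ (x : Fin d) (i' : Fin n), bOf x = i' ↔ x ∈ block d b i' := by
    intro x i'; constructor
    · intro h; rw [← h]; exact hbOf x
    · intro h; exact block_unique (hbOf x) h
  have hciff : ∀ (x : Fin d) (j' : Fin n'), cOf (w x) = j' ↔ w x ∈ block d c j' := by
    intro x j'; constructor
    · intro h; rw [← h]; exact hcOf (w x)
    · intro h; exact block_unique (hcOf (w x)) h
  have key : ∀ p : Fin n × Fin n',
      (S.filter (fun x => (bOf x, cOf (w x)) = p)).card + (if p = (i, j) then k else 0)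
      = if p.1 ≤ i ∧ j ≤ p.2 then m p.1 p.2 else 0 := by
    rintro ⟨i', j'⟩
    simp only [Prod.mk.injEq]
    by_cases hii : i' ≤ i
    · by_cases hjj : j ≤ j'
      · rcases eq_or_lt_of_le hii with hieq | hii'
        · subst hieq
          rcases eq_or_lt_of_le hjj with hjeq | hjj'
          · -- case i' = i, j' = j
            subst hjeq
            rw [if_pos ⟨rfl, rfl⟩, if_pos ⟨le_refl _, le_refl _⟩]
            have hFeq : S.filter (fun x => bOf x = i' ∧ cOf (w x) = j)
                = ((block d b i').filter (fun x => w x ∈ block d c j)).filter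
                    (fun x => x < a) := by
              ext x
              simp only [hS, Finset.mem_filter, Finset.mem_univ, true_and,
                hbiff, hciff]
              constructor
              · rintro ⟨⟨h1, _⟩, h3, h4⟩; exact ⟨⟨h3, h4⟩, h1⟩
              · rintro ⟨⟨h3, h4⟩, h1⟩
                exact ⟨⟨h1, fA i' x a h3 haB h1⟩, h3, h4⟩
            rw [hFeq]
            have hsplit := Finset.card_filter_add_card_filter_not
              (s := (block d b i').filter (fun x => w x ∈ block d c j))
              (p := fun x => x < a)
            have hne : ((block d b i').filter (fun x => w x ∈ block d c j)).filter
                (fun x => ¬ x < a)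
                = ((block d b i').filter (fun x => w x ∈ block d c j)).filter
                (fun x => a ≤ x) := by
              apply Finset.filter_congr
              intro x _
              simp [not_lt]
            rw [hne, hkth] at hsplit
            rw [← hmcard i' j] at hsplit
            omega
          · -- case i' = i, j < j'
            have hjne : j' ≠ j := by intro hc; subst hc; exact lt_irrefl _ hjj'
            rw [if_neg (by rintro ⟨_, hc⟩; exact hjne hc), if_pos ⟨le_refl _, hjj⟩]
            have hFeq : S.filter (fun x => bOf x = i' ∧ cOf (w x) = j')
                = (block d b i').filter (fun x => w x ∈ block d c j') := by
              ext x
              simp only [hS, Finset.mem_filter, Finset.mem_univ, true_and,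
                hbiff, hciff]
              constructor
              · rintro ⟨_, h3, h4⟩; exact ⟨h3, h4⟩
              · rintro ⟨h3, h4⟩
                have hwlt : w a < w x := block_lt_block hjj' haC h4
                have hxa : x ≠ a := by
                  intro hc; subst hc; exact lt_irrefl _ hwlt
                have hxlt : x < a := by
                  rcases lt_trichotomy x a with h | h | h
                  · exact h
                  · exact absurd h hxa
                  · exact absurd (fA i' a x haB h3 h) (not_lt.2 hwlt.le)
                exact ⟨⟨hxlt, hwlt⟩, h3, h4⟩
            rw [hFeq, ← hmcard i' j', add_zero]
        · -- case i' < i, j ≤ j'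
          have hine : i' ≠ i := ne_of_lt hii'
          rw [if_neg (by rintro ⟨hc, _⟩; exact hine hc), if_pos ⟨hii, hjj⟩]
          have hFeq : S.filter (fun x => bOf x = i' ∧ cOf (w x) = j')
              = (block d b i').filter (fun x => w x ∈ block d c j') := by
            ext x
            simp only [hS, Finset.mem_filter, Finset.mem_univ, true_and,
              hbiff, hciff]
            constructor
            · rintro ⟨_, h3, h4⟩; exact ⟨h3, h4⟩
            · rintro ⟨h3, h4⟩
              have hxlt : x < a := block_lt_block hii' h3 haB
              have hwlt : w a < w x := by
                rcases eq_or_lt_of_le hjj with hjeq | hjj'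
                · exact fB j' x a h4 (hjeq ▸ haC) hxlt
                · exact block_lt_block hjj' haC h4
              exact ⟨⟨hxlt, hwlt⟩, h3, h4⟩
          rw [hFeq, ← hmcard i' j', add_zero]
      · -- case j' < j : empty fiber
        have hine : ¬(i' = i ∧ j' = j) := by
          rintro ⟨_, hc⟩; exact hjj (hc ▸ le_refl j)
        rw [if_neg hine, if_neg (by rintro ⟨_, hc⟩; exact hjj hc), add_zero]
        rw [Finset.card_eq_zero, Finset.filter_eq_empty_iff]
        rintro x hx ⟨hb1, hc1⟩
        rw [hS, Finset.mem_filter] at hx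
        have hwx : w x ∈ block d c j' := (hciff x j').1 hc1
        have hlt : w x < w a := block_lt_block (not_le.1 hjj) hwx haC
        exact absurd hx.2.2 (not_lt.2 hlt.le)
    · -- case i < i' : empty fiber
      have hine : ¬(i' = i ∧ j' = j) := by
        rintro ⟨hc, _⟩; exact hii (hc ▸ le_refl i)
      rw [if_neg hine, if_neg (by rintro ⟨hc, _⟩; exact hii hc), add_zero]
      rw [Finset.card_eq_zero, Finset.filter_eq_empty_iff]
      rintro x hx ⟨hb1, hc1⟩
      rw [hS, Finset.mem_filter] at hx
      have hxb : x ∈ block d b i' := (hbiff x i').1 hb1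
      have hlt : a < x := block_lt_block (not_le.1 hii) haB hxb
      exact absurd hx.2.1 (not_lt.2 hlt.le)
  have hsum := Finset.sum_congr rfl (fun p (_ : p ∈ (univ : Finset (Fin n × Fin n'))) => key p)
  rw [Finset.sum_add_distrib] at hsum
  have h1 : ∑ p ∈ (univ : Finset (Fin n × Fin n')), (if p = (i, j) then k else 0) = k := by
    rw [Finset.sum_ite_eq' univ (i, j) (fun _ => k)]
    simp
  have h2 : ∑ p ∈ (univ : Finset (Fin n × Fin n')),
      (if p.1 ≤ i ∧ j ≤ p.2 then m p.1 p.2 else 0) = sUR m i j := by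
    rw [← Finset.univ_product_univ, Finset.sum_product]
    unfold sUR
    rw [Finset.sum_filter]
    apply Finset.sum_congr rfl
    intro i' _
    by_cases hA : i' ≤ i
    · rw [if_pos hA]
      rw [Finset.sum_filter]
      apply Finset.sum_congr rfl
      intro j' _
      simp [hA]
    · simp [hA]
  rw [h1, h2] at hsum
  rw [hinvi, hfib]
  exact hsum
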